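/- arXiv:2009.11259 — 2 statements merged into one kernel-verified Lean document; each statement's English description precedes it below -/
import Mathlib

section
/- Let r(y) := 1 + (1/4)(cos(2πy₁) − 2 sin(2πy₁)) sin(2πy₂) and let A(y) be the 2×2 diagonal matrix with entries a₁₁(y) = (1 − (1/2) sin(2πy₁) sin(2πy₂))/r(y), a₂₂(y) = (1 + (1/2) sin(2πy₁) sin(2πy₂))/r(y), a₁₂ = a₂₁ = 0. Define v¹¹(y) := −(sin(2πy₂)/(32π²)) cos(2πy₁), v²²(y) := −(sin(2πy₂)/(32π²)) (cos(2πy₁) − 4 sin(2πy₁)), and v¹² = v²¹ := 0. Then for every i,j ∈ {1,2}: (i) −(a₁₁(y) ∂²₁₁v^{ij}(y) + a₂₂(y) ∂²₂₂v^{ij}(y)) = a_{ij}(y) − δ_{ij} for all y ∈ ℝ², where δ_{ij} is the Kronecker delta; (ii) v^{ij}(y + k) = v^{ij}(y) for all y ∈ ℝ², k ∈ ℤ²; (iii) ∫_Y v^{ij}(y) dy = 0, where Y = [0,1]². -/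
/-- First partial derivative (w.r.t. the first variable) of a function of two real variables. -/
noncomputable def p1 (f : ℝ → ℝ → ℝ) : ℝ → ℝ → ℝ := fun x y => deriv (fun t => f t y) x

/-- Partial derivative w.r.t. the second variable. -/
noncomputable def p2 (f : ℝ → ℝ → ℝ) : ℝ → ℝ → ℝ := fun x y => deriv (fun t => f x t) y

/-- The invariant measure `r`. -/
noncomputable def rr (y₁ y₂ : ℝ) : ℝ :=
  1 + (1/4) * (Real.cos (2 * Real.pi * y₁) - 2 * Real.sin (2 * Real.pi * y₁))
    * Real.sin (2 * Real.pi * y₂)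

/-- Entry `a₁₁` of the `c`-bad matrix `A`. -/
noncomputable def a11 (y₁ y₂ : ℝ) : ℝ :=
  (1 - (1/2) * Real.sin (2 * Real.pi * y₁) * Real.sin (2 * Real.pi * y₂)) / rr y₁ y₂

/-- Entry `a₂₂` of the `c`-bad matrix `A`. -/
noncomputable def a22 (y₁ y₂ : ℝ) : ℝ :=
  (1 + (1/2) * Real.sin (2 * Real.pi * y₁) * Real.sin (2 * Real.pi * y₂)) / rr y₁ y₂

/-- The full (diagonal) matrix `A` with entries `a_{ij}`. -/
noncomputable def aMat : Fin 2 → Fin 2 → ℝ → ℝ → ℝ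
  | 0, 0 => a11
  | 1, 1 => a22
  | _, _ => fun _ _ => 0

/-- The matrix `V = (v^{ij})` of corrector functions. -/
noncomputable def vv : Fin 2 → Fin 2 → ℝ → ℝ → ℝ
  | 0, 0 => fun y₁ y₂ =>
      -(Real.sin (2 * Real.pi * y₂) / (32 * Real.pi ^ 2)) * Real.cos (2 * Real.pi * y₁)
  | 1, 1 => fun y₁ y₂ =>
      -(Real.sin (2 * Real.pi * y₂) / (32 * Real.pi ^ 2))
        * (Real.cos (2 * Real.pi * y₁) - 4 * Real.sin (2 * Real.pi * y₁))
  | _, _ => fun _ _ => 0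

open Real in
lemma hasDerivAt_sin2pi (y : ℝ) :
    HasDerivAt (fun t => Real.sin (2*π*t)) (2*π*Real.cos (2*π*y)) y := by
  have h := ((hasDerivAt_id y).const_mul (2*π)).sin
  convert h using 1
  rfl
  change _ = Real.cos (2*π*y) * (2*π*1); ring

open Real in
lemma hasDerivAt_cos2pi (y : ℝ) :
    HasDerivAt (fun t => Real.cos (2*π*t)) (-(2*π*Real.sin (2*π*y))) y := by
  have h := ((hasDerivAt_id y).const_mul (2*π)).cos
  convert h using 1
  rfl
  change _ = -Real.sin (2*π*y) * (2*π*1); ring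

open Real in
lemma deriv_trig (c a b y : ℝ) :
    deriv (fun t => c * (a * Real.sin (2*π*t) + b * Real.cos (2*π*t))) y
      = c * (a * (2*π*Real.cos (2*π*y)) - b * (2*π*Real.sin (2*π*y))) := by
  have h := (((hasDerivAt_sin2pi y).const_mul a).add ((hasDerivAt_cos2pi y).const_mul b)).const_mul c
  refine h.deriv.trans ?_
  ring

open Real in
lemma rr_pos (y₁ y₂ : ℝ) : 0 < rr y₁ y₂ := by
  unfold rr
  nlinarith [Real.neg_one_le_sin (2*π*y₁), Real.sin_le_one (2*π*y₁),
    Real.neg_one_le_sin (2*π*y₂), Real.sin_le_one (2*π*y₂),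
    Real.neg_one_le_cos (2*π*y₁), Real.cos_le_one (2*π*y₁),
    mul_self_nonneg (Real.sin (2*π*y₂) - 1), mul_self_nonneg (Real.sin (2*π*y₂) + 1)]

open Real in
lemma int_sin2pi : (∫ x in (0:ℝ)..1, Real.sin (2*π*x)) = 0 := by
  rw [intervalIntegral.integral_comp_mul_left Real.sin (by positivity : (2:ℝ)*π ≠ 0)]
  simp [integral_sin, Real.cos_two_pi]

open Real

/-- The functions `v^{ij}` solve the periodic cell problems
`−A:D²v^{ij} = a_{ij} − δ_{ij}` (the effective matrix being the identity),
are `ℤ²`-periodic, and have zero mean over the unit cell `Y = [0,1]²`. -/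
theorem correctors_of_c_bad_matrix :
    (∀ i j : Fin 2, ∀ y₁ y₂ : ℝ,
        -(a11 y₁ y₂ * p1 (p1 (vv i j)) y₁ y₂ + a22 y₁ y₂ * p2 (p2 (vv i j)) y₁ y₂)
          = aMat i j y₁ y₂ - (if i = j then 1 else 0)) ∧
    (∀ (i j : Fin 2) (y₁ y₂ : ℝ) (k₁ k₂ : ℤ),
        vv i j (y₁ + k₁) (y₂ + k₂) = vv i j y₁ y₂) ∧
    (∀ i j : Fin 2, (∫ y₁ in (0:ℝ)..1, ∫ y₂ in (0:ℝ)..1, vv i j y₁ y₂) = 0) := by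
  have hpi := Real.pi_ne_zero
  -- second derivatives of vv 0 0
  have hp1v00 : p1 (vv 0 0) = fun x y =>
      (Real.sin (2*π*y)/(32*π^2)) * (1 * Real.sin (2*π*x) + 0 * Real.cos (2*π*x)) * (2*π) := by
    funext x y
    simp only [p1, vv]
    rw [show (fun t => -(Real.sin (2*π*y)/(32*π^2)) * Real.cos (2*π*t))
        = fun t => (-(Real.sin (2*π*y)/(32*π^2))) * ((0:ℝ) * Real.sin (2*π*t) + 1 * Real.cos (2*π*t))
        from funext fun t => by ring]
    rw [deriv_trig]; ring
  have h11v00 : ∀ x y : ℝ, p1 (p1 (vv 0 0)) x y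
      = (1/8) * Real.cos (2*π*x) * Real.sin (2*π*y) := by
    intro x y
    rw [hp1v00]
    simp only [p1]
    rw [show (fun t => Real.sin (2*π*y)/(32*π^2) * (1 * Real.sin (2*π*t) + 0 * Real.cos (2*π*t)) * (2*π))
        = fun t => (Real.sin (2*π*y)/(32*π^2) * (2*π)) * ((1:ℝ) * Real.sin (2*π*t) + 0 * Real.cos (2*π*t))
        from funext fun t => by ring]
    rw [deriv_trig]
    field_simp
    ring
  have hp2v00 : p2 (vv 0 0) = fun x y =>
      -(Real.cos (2*π*x)/(32*π^2)) * (2*π*Real.cos (2*π*y)) := by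
    funext x y
    simp only [p2, vv]
    rw [show (fun t => -(Real.sin (2*π*t)/(32*π^2)) * Real.cos (2*π*x))
        = fun t => (-(Real.cos (2*π*x)/(32*π^2))) * ((1:ℝ) * Real.sin (2*π*t) + 0 * Real.cos (2*π*t))
        from funext fun t => by ring]
    rw [deriv_trig]; ring
  have h22v00 : ∀ x y : ℝ, p2 (p2 (vv 0 0)) x y
      = (1/8) * Real.cos (2*π*x) * Real.sin (2*π*y) := by
    intro x y
    rw [hp2v00]
    simp only [p2]
    rw [show (fun t => -(Real.cos (2*π*x)/(32*π^2)) * (2*π*Real.cos (2*π*t)))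
        = fun t => (-(Real.cos (2*π*x)/(32*π^2)) * (2*π)) * ((0:ℝ) * Real.sin (2*π*t) + 1 * Real.cos (2*π*t))
        from funext fun t => by ring]
    rw [deriv_trig]
    field_simp
    ring
  -- second derivatives of vv 1 1
  have hp1v11 : p1 (vv 1 1) = fun x y =>
      (Real.sin (2*π*y)/(32*π^2)) * ((2*π*Real.sin (2*π*x)) + 4 * (2*π*Real.cos (2*π*x))) := by
    funext x y
    simp only [p1, vv]
    rw [show (fun t => -(Real.sin (2*π*y)/(32*π^2)) * (Real.cos (2*π*t) - 4 * Real.sin (2*π*t)))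
        = fun t => (Real.sin (2*π*y)/(32*π^2)) * ((4:ℝ) * Real.sin (2*π*t) + (-1) * Real.cos (2*π*t))
        from funext fun t => by ring]
    rw [deriv_trig]; ring
  have h11v11 : ∀ x y : ℝ, p1 (p1 (vv 1 1)) x y
      = (1/8) * (Real.cos (2*π*x) - 4 * Real.sin (2*π*x)) * Real.sin (2*π*y) := by
    intro x y
    rw [hp1v11]
    simp only [p1]
    rw [show (fun t => Real.sin (2*π*y)/(32*π^2) * ((2*π*Real.sin (2*π*t)) + 4 * (2*π*Real.cos (2*π*t))))
        = fun t => (Real.sin (2*π*y)/(32*π^2) * (2*π)) * ((1:ℝ) * Real.sin (2*π*t) + 4 * Real.cos (2*π*t))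
        from funext fun t => by ring]
    rw [deriv_trig]
    field_simp
    ring
  have hp2v11 : p2 (vv 1 1) = fun x y =>
      -((Real.cos (2*π*x) - 4 * Real.sin (2*π*x))/(32*π^2)) * (2*π*Real.cos (2*π*y)) := by
    funext x y
    simp only [p2, vv]
    rw [show (fun t => -(Real.sin (2*π*t)/(32*π^2)) * (Real.cos (2*π*x) - 4 * Real.sin (2*π*x)))
        = fun t => (-((Real.cos (2*π*x) - 4 * Real.sin (2*π*x))/(32*π^2))) * ((1:ℝ) * Real.sin (2*π*t) + 0 * Real.cos (2*π*t))
        from funext fun t => by ring]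
    rw [deriv_trig]; ring
  have h22v11 : ∀ x y : ℝ, p2 (p2 (vv 1 1)) x y
      = (1/8) * (Real.cos (2*π*x) - 4 * Real.sin (2*π*x)) * Real.sin (2*π*y) := by
    intro x y
    rw [hp2v11]
    simp only [p2]
    rw [show (fun t => -((Real.cos (2*π*x) - 4 * Real.sin (2*π*x))/(32*π^2)) * (2*π*Real.cos (2*π*t)))
        = fun t => (-((Real.cos (2*π*x) - 4 * Real.sin (2*π*x))/(32*π^2)) * (2*π)) * ((0:ℝ) * Real.sin (2*π*t) + 1 * Real.cos (2*π*t))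
        from funext fun t => by ring]
    rw [deriv_trig]
    field_simp
    ring
  refine ⟨?_, ?_, ?_⟩
  · intro i j y₁ y₂
    have hr := (rr_pos y₁ y₂).ne'
    fin_cases i <;> fin_cases j
    · rw [show (⟨0, by norm_num⟩ : Fin 2) = 0 from rfl]
      rw [h11v00 y₁ y₂, h22v00 y₁ y₂]
      simp only [aMat, a11, a22, if_pos rfl, eq_self_iff_true, if_true]
      field_simp [hr]
      simp only [rr]
      ring
    · simp only [show (⟨0, by norm_num⟩ : Fin 2) = 0 from rfl,
        show (⟨1, by norm_num⟩ : Fin 2) = 1 from rfl]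
      simp [p1, p2, vv, aMat]
    · simp only [show (⟨0, by norm_num⟩ : Fin 2) = 0 from rfl,
        show (⟨1, by norm_num⟩ : Fin 2) = 1 from rfl]
      simp [p1, p2, vv, aMat]
    · rw [show (⟨1, by norm_num⟩ : Fin 2) = 1 from rfl]
      rw [h11v11 y₁ y₂, h22v11 y₁ y₂]
      simp only [aMat, a11, a22, if_pos rfl, eq_self_iff_true, if_true]
      field_simp [hr]
      simp only [rr]
      ring
  · intro i j y₁ y₂ k₁ k₂
    have e1 : 2*π*(y₁ + (k₁:ℝ)) = 2*π*y₁ + (k₁:ℝ) * (2*π) := by ring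
    have e2 : 2*π*(y₂ + (k₂:ℝ)) = 2*π*y₂ + (k₂:ℝ) * (2*π) := by ring
    fin_cases i <;> fin_cases j <;>
      simp [vv, e1, e2, Real.sin_add_int_mul_two_pi, Real.cos_add_int_mul_two_pi]
  · intro i j
    have key : ∀ c : ℝ → ℝ, (∀ y₁, (∫ y₂ in (0:ℝ)..1, c y₁ * Real.sin (2*π*y₂)) = 0) := by
      intro c y₁
      rw [intervalIntegral.integral_const_mul, int_sin2pi, mul_zero]
    fin_cases i <;> fin_cases j
    · have : ∀ y₁ : ℝ, (∫ y₂ in (0:ℝ)..1, vv 0 0 y₁ y₂) = 0 := by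
        intro y₁
        have : (fun y₂ => vv 0 0 y₁ y₂)
            = fun y₂ => (-(Real.cos (2*π*y₁)/(32*π^2))) * Real.sin (2*π*y₂) := by
          funext y₂; simp only [vv]; ring
        rw [this, intervalIntegral.integral_const_mul, int_sin2pi, mul_zero]
      simp [this]
    · simp [vv]
    · simp [vv]
    · have : ∀ y₁ : ℝ, (∫ y₂ in (0:ℝ)..1, vv 1 1 y₁ y₂) = 0 := by
        intro y₁
        have : (fun y₂ => vv 1 1 y₁ y₂)
            = fun y₂ => (-((Real.cos (2*π*y₁) - 4 * Real.sin (2*π*y₁))/(32*π^2))) * Real.sin (2*π*y₂) := by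
          funext y₂; simp only [vv]; ring
        rw [this, intervalIntegral.integral_const_mul, int_sin2pi, mul_zero]
      simp [this]
end

section
/- Let n ≥ 1, Ω ⊆ ℝⁿ open, ε > 0. Let A : ℝⁿ → ℝ^{n×n} have symmetric values with entries a_{ij}, and let Ā ∈ ℝ^{n×n} be a constant symmetric matrix with entries ā_{ij}. Suppose: f : Ω → ℝ; uᵋ : Ω → ℝ is twice differentiable with −A(x/ε):D²uᵋ(x) = f(x) on Ω; u : Ω → ℝ is four times continuously differentiable with −Ā:D²u = f on Ω; for each k,l, v^{kl} : ℝⁿ → ℝ is twice continuously differentiable with −A(y):D²v^{kl}(y) = a_{kl}(y) − ā_{kl} for all y ∈ ℝⁿ; θᵋ : Ω → ℝ is twice differentiable with A(x/ε):D²θᵋ(x) = 0 on Ω; and wᵋ : Ω → ℝ is twice differentiable with −A(x/ε):D²wᵋ(x) = ∑_{i,j,k,l=1}^{n} a_{ij}(x/ε) ∂_i v^{kl}(x/ε) ∂³_{jkl}u(x) on Ω. Define φᵋ(x) := ε² ( ∑_{k,l=1}^{n} v^{kl}(x/ε) ∂²_{kl}u(x) + θᵋ(x) ). Then for every x ∈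 Ω: −A(x/ε):D²(uᵋ − u − φᵋ − 2εwᵋ)(x) = ε² ∑_{i,j,k,l=1}^{n} a_{ij}(x/ε) v^{kl}(x/ε) ∂⁴_{ijkl}u(x). -/
/-- The partial derivative `∂_i f` of `f : ℝⁿ → ℝ`, as the Fréchet derivative applied to the
`i`-th standard basis vector. -/
noncomputable def pd {n : ℕ} (i : Fin n) (f : (Fin n → ℝ) → ℝ) : (Fin n → ℝ) → ℝ :=
  fun x => fderiv ℝ f x (Pi.single i 1)

/-- `f` is twice differentiable on `Ω`: it is differentiable on `Ω` and so are all its first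
partial derivatives. -/
def TwiceDiffOn {n : ℕ} (f : (Fin n → ℝ) → ℝ) (Ω : Set (Fin n → ℝ)) : Prop :=
  DifferentiableOn ℝ f Ω ∧ ∀ i : Fin n, DifferentiableOn ℝ (pd i f) Ω

open Filter Topology

section Helpers
variable {n : ℕ}

lemma pd_congr {f g : (Fin n → ℝ) → ℝ} {x : Fin n → ℝ} (h : f =ᶠ[𝓝 x] g) (j : Fin n) :
    pd j f x = pd j g x := by
  unfold pd; rw [Filter.EventuallyEq.fderiv_eq h]

lemma pd_sub {f g : (Fin n → ℝ) → ℝ} {x : Fin n → ℝ} (hf : DifferentiableAt ℝ f x)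
    (hg : DifferentiableAt ℝ g x) (j : Fin n) :
    pd j (fun y => f y - g y) x = pd j f x - pd j g x := by
  unfold pd; rw [fderiv_fun_sub hf hg]; rfl

lemma pd_add {f g : (Fin n → ℝ) → ℝ} {x : Fin n → ℝ} (hf : DifferentiableAt ℝ f x)
    (hg : DifferentiableAt ℝ g x) (j : Fin n) :
    pd j (fun y => f y + g y) x = pd j f x + pd j g x := by
  unfold pd; rw [fderiv_fun_add hf hg]; rfl

lemma pd_const_mul {f : (Fin n → ℝ) → ℝ} {x : Fin n → ℝ} (hf : DifferentiableAt ℝ f x)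
    (c : ℝ) (j : Fin n) :
    pd j (fun y => c * f y) x = c * pd j f x := by
  unfold pd; rw [fderiv_const_mul hf c]; rfl

lemma pd_mul {f g : (Fin n → ℝ) → ℝ} {x : Fin n → ℝ} (hf : DifferentiableAt ℝ f x)
    (hg : DifferentiableAt ℝ g x) (j : Fin n) :
    pd j (fun y => f y * g y) x = pd j f x * g x + f x * pd j g x := by
  unfold pd; rw [fderiv_fun_mul hf hg]
  simp only [ContinuousLinearMap.add_apply, ContinuousLinearMap.coe_smul', Pi.smul_apply,
    smul_eq_mul]
  ring

lemma pd_sum {ι : Type*} (s : Finset ι) {F : ι → (Fin n → ℝ) → ℝ} {x : Fin n → ℝ}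
    (h : ∀ k ∈ s, DifferentiableAt ℝ (F k) x) (j : Fin n) :
    pd j (fun y => ∑ k ∈ s, F k y) x = ∑ k ∈ s, pd j (F k) x := by
  unfold pd; rw [fderiv_fun_sum h]; simp

lemma diffAt_comp_smul {c : ℝ} {f : (Fin n → ℝ) → ℝ} {x : Fin n → ℝ}
    (hf : DifferentiableAt ℝ f (c • x)) :
    DifferentiableAt ℝ (fun y => f (c • y)) x := by
  have : DifferentiableAt ℝ (fun y : Fin n → ℝ => c • y) x :=
    (differentiable_id.const_smul c).differentiableAt
  exact hf.comp x this

lemma pd_comp_smul {c : ℝ} {f : (Fin n → ℝ) → ℝ} {x : Fin n → ℝ}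
    (hf : DifferentiableAt ℝ f (c • x)) (j : Fin n) :
    pd j (fun y => f (c • y)) x = c * pd j f (c • x) := by
  have hL : HasFDerivAt (fun y : Fin n → ℝ => c • y)
      (c • ContinuousLinearMap.id ℝ (Fin n → ℝ)) x :=
    ((c • ContinuousLinearMap.id ℝ (Fin n → ℝ)).hasFDerivAt)
  have h1 : HasFDerivAt (fun y => f (c • y))
      ((fderiv ℝ f (c • x)).comp (c • ContinuousLinearMap.id ℝ (Fin n → ℝ))) x :=
    (hf.hasFDerivAt.comp x hL)
  unfold pd
  rw [h1.fderiv]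
  simp [smul_eq_mul]

lemma contDiffAt_pd {m k : WithTop ℕ∞} {f : (Fin n → ℝ) → ℝ} {x : Fin n → ℝ}
    (hmk : m + 1 ≤ k) (hf : ContDiffAt ℝ k f x) (l : Fin n) :
    ContDiffAt ℝ m (pd l f) x :=
  (hf.fderiv_right hmk).clm_apply contDiffAt_const

lemma sum_comm4 {M : Type*} [AddCommMonoid M] (f : Fin n → Fin n → Fin n → Fin n → M) :
    ∑ i, ∑ j, ∑ k, ∑ l, f i j k l = ∑ k, ∑ l, ∑ i, ∑ j, f i j k l :=
  calc ∑ i, ∑ j, ∑ k, ∑ l, f i j k l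
      = ∑ i, ∑ k, ∑ l, ∑ j, f i j k l := Finset.sum_congr rfl fun i _ => by
        rw [Finset.sum_comm]; exact Finset.sum_congr rfl fun k _ => Finset.sum_comm
    _ = ∑ k, ∑ i, ∑ l, ∑ j, f i j k l := Finset.sum_comm
    _ = ∑ k, ∑ l, ∑ i, ∑ j, f i j k l := Finset.sum_congr rfl fun k _ => Finset.sum_comm

end Helpers

/-- The identity `−A(x/ε):D²(uᵋ − u − φᵋ − 2εwᵋ) = ε² ∑ a_{ij}(x/ε) v^{kl}(x/ε) ∂⁴_{ijkl}u`
on `Ω`, where `φᵋ = ε²(∑ v^{kl}(·/ε) ∂²_{kl}u + θᵋ)`. -/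
theorem corrected_equation_second_order {n : ℕ} (hn : 1 ≤ n)
    (Ω : Set (Fin n → ℝ)) (hΩ : IsOpen Ω)
    (ε : ℝ) (hε : 0 < ε)
    (A : (Fin n → ℝ) → Fin n → Fin n → ℝ)
    (hAsymm : ∀ y i j, A y i j = A y j i)
    (Abar : Fin n → Fin n → ℝ) (hAbarSymm : ∀ i j, Abar i j = Abar j i)
    (f : (Fin n → ℝ) → ℝ)
    (uε u θε wε : (Fin n → ℝ) → ℝ)
    (huε : TwiceDiffOn uε Ω)
    (huεeq : ∀ x ∈ Ω, -(∑ i, ∑ j, A (ε⁻¹ • x) i j * pd i (pd j uε) x) = f x)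
    (hu : ContDiffOn ℝ 4 u Ω)
    (hueq : ∀ x ∈ Ω, -(∑ i, ∑ j, Abar i j * pd i (pd j u) x) = f x)
    (v : Fin n → Fin n → (Fin n → ℝ) → ℝ)
    (hv : ∀ k l, ContDiff ℝ 2 (v k l))
    (hveq : ∀ k l, ∀ y : Fin n → ℝ,
      -(∑ i, ∑ j, A y i j * pd i (pd j (v k l)) y) = A y k l - Abar k l)
    (hθ : TwiceDiffOn θε Ω)
    (hθeq : ∀ x ∈ Ω, (∑ i, ∑ j, A (ε⁻¹ • x) i j * pd i (pd j θε) x) = 0)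
    (hw : TwiceDiffOn wε Ω)
    (hweq : ∀ x ∈ Ω,
      -(∑ i, ∑ j, A (ε⁻¹ • x) i j * pd i (pd j wε) x)
        = ∑ i, ∑ j, ∑ k, ∑ l,
            A (ε⁻¹ • x) i j * pd i (v k l) (ε⁻¹ • x) * pd j (pd k (pd l u)) x) :
    ∀ x ∈ Ω,
      -(∑ i, ∑ j, A (ε⁻¹ • x) i j *
          pd i (pd j (fun y => uε y - u y -
            ε ^ 2 * ((∑ k, ∑ l, v k l (ε⁻¹ • y) * pd k (pd l u) y) + θε y)
            - 2 * ε * wε y)) x)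
        = ε ^ 2 * ∑ i, ∑ j, ∑ k, ∑ l, A (ε⁻¹ • x) i j *
            v k l (ε⁻¹ • x) * pd i (pd j (pd k (pd l u))) x := by
  intro x hx
  have hε' : ε ≠ 0 := ne_of_gt hε
  have hmem : Ω ∈ 𝓝 x := hΩ.mem_nhds hx
  have hnmem : ∀ y ∈ Ω, Ω ∈ 𝓝 y := fun y hy => hΩ.mem_nhds hy
  -- smoothness registry
  have hu4 : ∀ y ∈ Ω, ContDiffAt ℝ 4 u y := fun y hy => hu.contDiffAt (hnmem y hy)
  have hu3 : ∀ (l : Fin n), ∀ y ∈ Ω, ContDiffAt ℝ 3 (pd l u) y := fun l y hy =>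
    contDiffAt_pd (by norm_num) (hu4 y hy) l
  have hu2 : ∀ (k l : Fin n), ∀ y ∈ Ω, ContDiffAt ℝ 2 (pd k (pd l u)) y := fun k l y hy =>
    contDiffAt_pd (by norm_num) (hu3 l y hy) k
  have hu1 : ∀ (j k l : Fin n), ∀ y ∈ Ω, ContDiffAt ℝ 1 (pd j (pd k (pd l u))) y :=
    fun j k l y hy => contDiffAt_pd (by norm_num) (hu2 k l y hy) j
  have hv2 : ∀ (k l : Fin n) (y : Fin n → ℝ), ContDiffAt ℝ 2 (v k l) y :=
    fun k l y => (hv k l).contDiffAt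
  have hv1 : ∀ (j k l : Fin n) (y : Fin n → ℝ), ContDiffAt ℝ 1 (pd j (v k l)) y :=
    fun j k l y => contDiffAt_pd (by norm_num) (hv2 k l y) j
  -- differentiability registry
  have duε : ∀ y ∈ Ω, DifferentiableAt ℝ uε y := fun y hy =>
    (huε.1 y hy).differentiableAt (hnmem y hy)
  have du : ∀ y ∈ Ω, DifferentiableAt ℝ u y := fun y hy =>
    (hu4 y hy).differentiableAt (by norm_num)
  have dθ : ∀ y ∈ Ω, DifferentiableAt ℝ θε y := fun y hy =>
    (hθ.1 y hy).differentiableAt (hnmem y hy)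
  have dw : ∀ y ∈ Ω, DifferentiableAt ℝ wε y := fun y hy =>
    (hw.1 y hy).differentiableAt (hnmem y hy)
  have dgu : ∀ (k l : Fin n), ∀ y ∈ Ω, DifferentiableAt ℝ (pd k (pd l u)) y :=
    fun k l y hy => (hu2 k l y hy).differentiableAt (by norm_num)
  have dG : ∀ (j k l : Fin n), ∀ y ∈ Ω, DifferentiableAt ℝ (pd j (pd k (pd l u))) y :=
    fun j k l y hy => (hu1 j k l y hy).differentiableAt (by norm_num)
  have dv : ∀ (k l : Fin n) (y : Fin n → ℝ), DifferentiableAt ℝ (v k l) y :=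
    fun k l y => (hv2 k l y).differentiableAt (by norm_num)
  have dP : ∀ (j k l : Fin n) (y : Fin n → ℝ), DifferentiableAt ℝ (pd j (v k l)) y :=
    fun j k l y => (hv1 j k l y).differentiableAt (by norm_num)
  have dvs : ∀ (k l : Fin n) (y : Fin n → ℝ),
      DifferentiableAt ℝ (fun y' => v k l (ε⁻¹ • y')) y :=
    fun k l y => diffAt_comp_smul (dv k l _)
  have dPs : ∀ (j k l : Fin n) (y : Fin n → ℝ),
      DifferentiableAt ℝ (fun y' => pd j (v k l) (ε⁻¹ • y')) y :=
    fun j k l y => diffAt_comp_smul (dP j k l _)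
  -- Step A : first-order expansion, valid on all of Ω
  have stepA : ∀ (j : Fin n), ∀ y ∈ Ω,
      pd j (fun y' => uε y' - u y' -
          ε ^ 2 * ((∑ k, ∑ l, v k l (ε⁻¹ • y') * pd k (pd l u) y') + θε y')
          - 2 * ε * wε y') y
      = pd j uε y - pd j u y
        - ε ^ 2 * ((∑ k, ∑ l, (ε⁻¹ * pd j (v k l) (ε⁻¹ • y) * pd k (pd l u) y
              + v k l (ε⁻¹ • y) * pd j (pd k (pd l u)) y)) + pd j θε y)
        - 2 * ε * pd j wε y := by
    intro j y hy
    have dterm : ∀ k l : Fin n,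
        DifferentiableAt ℝ (fun y' => v k l (ε⁻¹ • y') * pd k (pd l u) y') y :=
      fun k l => (dvs k l y).mul (dgu k l y hy)
    have dsuml : ∀ k : Fin n,
        DifferentiableAt ℝ (fun y' => ∑ l, v k l (ε⁻¹ • y') * pd k (pd l u) y') y :=
      fun k => DifferentiableAt.fun_sum fun l _ => dterm k l
    have dS : DifferentiableAt ℝ
        (fun y' => ∑ k, ∑ l, v k l (ε⁻¹ • y') * pd k (pd l u) y') y :=
      DifferentiableAt.fun_sum fun k _ => dsuml k
    have E1 : pd j (fun y' => uε y' - u y' -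
          ε ^ 2 * ((∑ k, ∑ l, v k l (ε⁻¹ • y') * pd k (pd l u) y') + θε y')
          - 2 * ε * wε y') y
        = pd j (fun y' => uε y' - u y' -
            ε ^ 2 * ((∑ k, ∑ l, v k l (ε⁻¹ • y') * pd k (pd l u) y') + θε y')) y
          - pd j (fun y' => 2 * ε * wε y') y :=
      pd_sub (((duε y hy).sub (du y hy)).sub
        (((dS.add (dθ y hy))).const_mul (ε ^ 2))) ((dw y hy).const_mul (2 * ε)) j
    have E2 : pd j (fun y' => uε y' - u y' -
          ε ^ 2 * ((∑ k, ∑ l, v k l (ε⁻¹ • y') * pd k (pd l u) y') + θε y')) y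
        = pd j (fun y' => uε y' - u y') y
          - pd j (fun y' =>
              ε ^ 2 * ((∑ k, ∑ l, v k l (ε⁻¹ • y') * pd k (pd l u) y') + θε y')) y :=
      pd_sub ((duε y hy).sub (du y hy)) ((dS.add (dθ y hy)).const_mul (ε ^ 2)) j
    have E3 : pd j (fun y' => uε y' - u y') y = pd j uε y - pd j u y :=
      pd_sub (duε y hy) (du y hy) j
    have E4 : pd j (fun y' =>
          ε ^ 2 * ((∑ k, ∑ l, v k l (ε⁻¹ • y') * pd k (pd l u) y') + θε y')) y
        = ε ^ 2 * pd j (fun y' =>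
            (∑ k, ∑ l, v k l (ε⁻¹ • y') * pd k (pd l u) y') + θε y') y :=
      pd_const_mul (dS.add (dθ y hy)) (ε ^ 2) j
    have E5 : pd j (fun y' =>
          (∑ k, ∑ l, v k l (ε⁻¹ • y') * pd k (pd l u) y') + θε y') y
        = pd j (fun y' => ∑ k, ∑ l, v k l (ε⁻¹ • y') * pd k (pd l u) y') y + pd j θε y :=
      pd_add dS (dθ y hy) j
    have E6 : pd j (fun y' => ∑ k, ∑ l, v k l (ε⁻¹ • y') * pd k (pd l u) y') y
        = ∑ k, pd j (fun y' => ∑ l, v k l (ε⁻¹ • y') * pd k (pd l u) y') y :=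
      pd_sum Finset.univ (fun k _ => dsuml k) j
    have E7 : ∀ k : Fin n, pd j (fun y' => ∑ l, v k l (ε⁻¹ • y') * pd k (pd l u) y') y
        = ∑ l, pd j (fun y' => v k l (ε⁻¹ • y') * pd k (pd l u) y') y :=
      fun k => pd_sum Finset.univ (fun l _ => dterm k l) j
    have E8 : ∀ k l : Fin n, pd j (fun y' => v k l (ε⁻¹ • y') * pd k (pd l u) y') y
        = ε⁻¹ * pd j (v k l) (ε⁻¹ • y) * pd k (pd l u) y
          + v k l (ε⁻¹ • y) * pd j (pd k (pd l u)) y := by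
      intro k l
      have E8a : pd j (fun y' => v k l (ε⁻¹ • y') * pd k (pd l u) y') y
          = pd j (fun y' => v k l (ε⁻¹ • y')) y * pd k (pd l u) y
            + v k l (ε⁻¹ • y) * pd j (pd k (pd l u)) y :=
        pd_mul (dvs k l y) (dgu k l y hy) j
      rw [E8a, pd_comp_smul (dv k l (ε⁻¹ • y)) j]
    have E9 : (∑ k, pd j (fun y' => ∑ l, v k l (ε⁻¹ • y') * pd k (pd l u) y') y)
        = ∑ k, ∑ l, (ε⁻¹ * pd j (v k l) (ε⁻¹ • y) * pd k (pd l u) y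
            + v k l (ε⁻¹ • y) * pd j (pd k (pd l u)) y) :=
      Finset.sum_congr rfl fun k _ => by
        rw [E7 k]; exact Finset.sum_congr rfl fun l _ => E8 k l
    have E10 : pd j (fun y' => 2 * ε * wε y') y = 2 * ε * pd j wε y :=
      pd_const_mul (dw y hy) (2 * ε) j
    rw [E1, E2, E3, E4, E5, E6, E9, E10]
  -- Step C : second-order expansion at x
  have key : ∀ i j : Fin n,
      pd i (pd j (fun y => uε y - u y -
          ε ^ 2 * ((∑ k, ∑ l, v k l (ε⁻¹ • y) * pd k (pd l u) y) + θε y)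
          - 2 * ε * wε y)) x
      = pd i (pd j uε) x - pd i (pd j u) x
        - ε ^ 2 * ((∑ k, ∑ l,
            (ε⁻¹ * (ε⁻¹ * pd i (pd j (v k l)) (ε⁻¹ • x)) * pd k (pd l u) x
              + ε⁻¹ * pd j (v k l) (ε⁻¹ • x) * pd i (pd k (pd l u)) x
              + (ε⁻¹ * pd i (v k l) (ε⁻¹ • x) * pd j (pd k (pd l u)) x
                + v k l (ε⁻¹ • x) * pd i (pd j (pd k (pd l u))) x)))
          + pd i (pd j θε) x)
        - 2 * ε * pd i (pd j wε) x := by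
    intro i j
    -- replace pd j F by its expansion near x
    have hEq : pd j (fun y => uε y - u y -
          ε ^ 2 * ((∑ k, ∑ l, v k l (ε⁻¹ • y) * pd k (pd l u) y) + θε y)
          - 2 * ε * wε y)
        =ᶠ[𝓝 x] fun y => pd j uε y - pd j u y
          - ε ^ 2 * ((∑ k, ∑ l, (ε⁻¹ * pd j (v k l) (ε⁻¹ • y) * pd k (pd l u) y
                + v k l (ε⁻¹ • y) * pd j (pd k (pd l u)) y)) + pd j θε y)
          - 2 * ε * pd j wε y := by
      filter_upwards [hmem] with y hy
      exact stepA j y hy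
    rw [pd_congr hEq i]
    -- differentiability at x of all the pieces
    have d1 : DifferentiableAt ℝ (pd j uε) x := (huε.2 j x hx).differentiableAt hmem
    have d2 : DifferentiableAt ℝ (pd j u) x := (hu3 j x hx).differentiableAt (by norm_num)
    have d3 : DifferentiableAt ℝ (pd j θε) x := (hθ.2 j x hx).differentiableAt hmem
    have d4 : DifferentiableAt ℝ (pd j wε) x := (hw.2 j x hx).differentiableAt hmem
    have dt1 : ∀ k l : Fin n, DifferentiableAt ℝ
        (fun y => ε⁻¹ * pd j (v k l) (ε⁻¹ • y) * pd k (pd l u) y) x :=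
      fun k l => (((dPs j k l x).const_mul ε⁻¹).mul (dgu k l x hx))
    have dt2 : ∀ k l : Fin n, DifferentiableAt ℝ
        (fun y => v k l (ε⁻¹ • y) * pd j (pd k (pd l u)) y) x :=
      fun k l => ((dvs k l x).mul (dG j k l x hx))
    have dterm : ∀ k l : Fin n, DifferentiableAt ℝ
        (fun y => ε⁻¹ * pd j (v k l) (ε⁻¹ • y) * pd k (pd l u) y
          + v k l (ε⁻¹ • y) * pd j (pd k (pd l u)) y) x :=
      fun k l => (dt1 k l).add (dt2 k l)
    have dsuml : ∀ k : Fin n, DifferentiableAt ℝ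
        (fun y => ∑ l, (ε⁻¹ * pd j (v k l) (ε⁻¹ • y) * pd k (pd l u) y
          + v k l (ε⁻¹ • y) * pd j (pd k (pd l u)) y)) x :=
      fun k => DifferentiableAt.fun_sum fun l _ => dterm k l
    have dS : DifferentiableAt ℝ
        (fun y => ∑ k, ∑ l, (ε⁻¹ * pd j (v k l) (ε⁻¹ • y) * pd k (pd l u) y
          + v k l (ε⁻¹ • y) * pd j (pd k (pd l u)) y)) x :=
      DifferentiableAt.fun_sum fun k _ => dsuml k
    have E1 : pd i (fun y => pd j uε y - pd j u y
          - ε ^ 2 * ((∑ k, ∑ l, (ε⁻¹ * pd j (v k l) (ε⁻¹ • y) * pd k (pd l u) y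
                + v k l (ε⁻¹ • y) * pd j (pd k (pd l u)) y)) + pd j θε y)
          - 2 * ε * pd j wε y) x
        = pd i (fun y => pd j uε y - pd j u y
            - ε ^ 2 * ((∑ k, ∑ l, (ε⁻¹ * pd j (v k l) (ε⁻¹ • y) * pd k (pd l u) y
                  + v k l (ε⁻¹ • y) * pd j (pd k (pd l u)) y)) + pd j θε y)) x
          - pd i (fun y => 2 * ε * pd j wε y) x :=
      pd_sub ((d1.sub d2).sub ((dS.add d3).const_mul (ε ^ 2))) (d4.const_mul (2 * ε)) i
    have E2 : pd i (fun y => pd j uε y - pd j u y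
          - ε ^ 2 * ((∑ k, ∑ l, (ε⁻¹ * pd j (v k l) (ε⁻¹ • y) * pd k (pd l u) y
                + v k l (ε⁻¹ • y) * pd j (pd k (pd l u)) y)) + pd j θε y)) x
        = pd i (fun y => pd j uε y - pd j u y) x
          - pd i (fun y => ε ^ 2 * ((∑ k, ∑ l,
              (ε⁻¹ * pd j (v k l) (ε⁻¹ • y) * pd k (pd l u) y
                + v k l (ε⁻¹ • y) * pd j (pd k (pd l u)) y)) + pd j θε y)) x :=
      pd_sub (d1.sub d2) ((dS.add d3).const_mul (ε ^ 2)) i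
    have E3 : pd i (fun y => pd j uε y - pd j u y) x
        = pd i (pd j uε) x - pd i (pd j u) x := pd_sub d1 d2 i
    have E4 : pd i (fun y => ε ^ 2 * ((∑ k, ∑ l,
          (ε⁻¹ * pd j (v k l) (ε⁻¹ • y) * pd k (pd l u) y
            + v k l (ε⁻¹ • y) * pd j (pd k (pd l u)) y)) + pd j θε y)) x
        = ε ^ 2 * pd i (fun y => (∑ k, ∑ l,
            (ε⁻¹ * pd j (v k l) (ε⁻¹ • y) * pd k (pd l u) y
              + v k l (ε⁻¹ • y) * pd j (pd k (pd l u)) y)) + pd j θε y) x :=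
      pd_const_mul (dS.add d3) (ε ^ 2) i
    have E5 : pd i (fun y => (∑ k, ∑ l,
          (ε⁻¹ * pd j (v k l) (ε⁻¹ • y) * pd k (pd l u) y
            + v k l (ε⁻¹ • y) * pd j (pd k (pd l u)) y)) + pd j θε y) x
        = pd i (fun y => ∑ k, ∑ l,
            (ε⁻¹ * pd j (v k l) (ε⁻¹ • y) * pd k (pd l u) y
              + v k l (ε⁻¹ • y) * pd j (pd k (pd l u)) y)) x + pd i (pd j θε) x :=
      pd_add dS d3 i
    have E6 : pd i (fun y => ∑ k, ∑ l,
          (ε⁻¹ * pd j (v k l) (ε⁻¹ • y) * pd k (pd l u) y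
            + v k l (ε⁻¹ • y) * pd j (pd k (pd l u)) y)) x
        = ∑ k, pd i (fun y => ∑ l,
            (ε⁻¹ * pd j (v k l) (ε⁻¹ • y) * pd k (pd l u) y
              + v k l (ε⁻¹ • y) * pd j (pd k (pd l u)) y)) x :=
      pd_sum Finset.univ (fun k _ => dsuml k) i
    have E7 : ∀ k : Fin n, pd i (fun y => ∑ l,
          (ε⁻¹ * pd j (v k l) (ε⁻¹ • y) * pd k (pd l u) y
            + v k l (ε⁻¹ • y) * pd j (pd k (pd l u)) y)) x
        = ∑ l, pd i (fun y =>
            ε⁻¹ * pd j (v k l) (ε⁻¹ • y) * pd k (pd l u) y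
              + v k l (ε⁻¹ • y) * pd j (pd k (pd l u)) y) x :=
      fun k => pd_sum Finset.univ (fun l _ => dterm k l) i
    have E8 : ∀ k l : Fin n, pd i (fun y =>
          ε⁻¹ * pd j (v k l) (ε⁻¹ • y) * pd k (pd l u) y
            + v k l (ε⁻¹ • y) * pd j (pd k (pd l u)) y) x
        = ε⁻¹ * (ε⁻¹ * pd i (pd j (v k l)) (ε⁻¹ • x)) * pd k (pd l u) x
            + ε⁻¹ * pd j (v k l) (ε⁻¹ • x) * pd i (pd k (pd l u)) x
            + (ε⁻¹ * pd i (v k l) (ε⁻¹ • x) * pd j (pd k (pd l u)) x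
              + v k l (ε⁻¹ • x) * pd i (pd j (pd k (pd l u))) x) := by
      intro k l
      have E8a : pd i (fun y =>
            ε⁻¹ * pd j (v k l) (ε⁻¹ • y) * pd k (pd l u) y
              + v k l (ε⁻¹ • y) * pd j (pd k (pd l u)) y) x
          = pd i (fun y => ε⁻¹ * pd j (v k l) (ε⁻¹ • y) * pd k (pd l u) y) x
            + pd i (fun y => v k l (ε⁻¹ • y) * pd j (pd k (pd l u)) y) x :=
        pd_add (dt1 k l) (dt2 k l) i
      have E8b : pd i (fun y => ε⁻¹ * pd j (v k l) (ε⁻¹ • y) * pd k (pd l u) y) x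
          = pd i (fun y => ε⁻¹ * pd j (v k l) (ε⁻¹ • y)) x * pd k (pd l u) x
            + ε⁻¹ * pd j (v k l) (ε⁻¹ • x) * pd i (pd k (pd l u)) x :=
        pd_mul ((dPs j k l x).const_mul ε⁻¹) (dgu k l x hx) i
      have E8c : pd i (fun y => ε⁻¹ * pd j (v k l) (ε⁻¹ • y)) x
          = ε⁻¹ * pd i (fun y => pd j (v k l) (ε⁻¹ • y)) x :=
        pd_const_mul (dPs j k l x) ε⁻¹ i
      have E8d : pd i (fun y => pd j (v k l) (ε⁻¹ • y)) x
          = ε⁻¹ * pd i (pd j (v k l)) (ε⁻¹ • x) :=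
        pd_comp_smul (dP j k l (ε⁻¹ • x)) i
      have E8e : pd i (fun y => v k l (ε⁻¹ • y) * pd j (pd k (pd l u)) y) x
          = pd i (fun y => v k l (ε⁻¹ • y)) x * pd j (pd k (pd l u)) x
            + v k l (ε⁻¹ • x) * pd i (pd j (pd k (pd l u))) x :=
        pd_mul (dvs k l x) (dG j k l x hx) i
      have E8f : pd i (fun y => v k l (ε⁻¹ • y)) x
          = ε⁻¹ * pd i (v k l) (ε⁻¹ • x) :=
        pd_comp_smul (dv k l (ε⁻¹ • x)) i
      rw [E8a, E8b, E8c, E8d, E8e, E8f]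
    have E9 : (∑ k, pd i (fun y => ∑ l,
          (ε⁻¹ * pd j (v k l) (ε⁻¹ • y) * pd k (pd l u) y
            + v k l (ε⁻¹ • y) * pd j (pd k (pd l u)) y)) x)
        = ∑ k, ∑ l, (ε⁻¹ * (ε⁻¹ * pd i (pd j (v k l)) (ε⁻¹ • x)) * pd k (pd l u) x
            + ε⁻¹ * pd j (v k l) (ε⁻¹ • x) * pd i (pd k (pd l u)) x
            + (ε⁻¹ * pd i (v k l) (ε⁻¹ • x) * pd j (pd k (pd l u)) x
              + v k l (ε⁻¹ • x) * pd i (pd j (pd k (pd l u))) x)) :=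
      Finset.sum_congr rfl fun k _ => by
        rw [E7 k]; exact Finset.sum_congr rfl fun l _ => E8 k l
    have E10 : pd i (fun y => 2 * ε * pd j wε y) x = 2 * ε * pd i (pd j wε) x :=
      pd_const_mul d4 (2 * ε) i
    rw [E1, E2, E3, E4, E5, E6, E9, E10]
  -- flatten the (i,j) entry
  have key2 : ∀ i j : Fin n,
      pd i (pd j (fun y => uε y - u y -
          ε ^ 2 * ((∑ k, ∑ l, v k l (ε⁻¹ • y) * pd k (pd l u) y) + θε y)
          - 2 * ε * wε y)) x
      = pd i (pd j uε) x - pd i (pd j u) x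
        - (∑ k, ∑ l, pd i (pd j (v k l)) (ε⁻¹ • x) * pd k (pd l u) x)
        - ε * (∑ k, ∑ l, pd j (v k l) (ε⁻¹ • x) * pd i (pd k (pd l u)) x)
        - ε * (∑ k, ∑ l, pd i (v k l) (ε⁻¹ • x) * pd j (pd k (pd l u)) x)
        - ε ^ 2 * (∑ k, ∑ l, v k l (ε⁻¹ • x) * pd i (pd j (pd k (pd l u))) x)
        - ε ^ 2 * pd i (pd j θε) x - 2 * ε * pd i (pd j wε) x := by
    intro i j
    rw [key i j]
    have hsplit : (∑ k, ∑ l : Fin n,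
        (ε⁻¹ * (ε⁻¹ * pd i (pd j (v k l)) (ε⁻¹ • x)) * pd k (pd l u) x
          + ε⁻¹ * pd j (v k l) (ε⁻¹ • x) * pd i (pd k (pd l u)) x
          + (ε⁻¹ * pd i (v k l) (ε⁻¹ • x) * pd j (pd k (pd l u)) x
            + v k l (ε⁻¹ • x) * pd i (pd j (pd k (pd l u))) x)))
      = ε⁻¹ * ε⁻¹ * (∑ k, ∑ l, pd i (pd j (v k l)) (ε⁻¹ • x) * pd k (pd l u) x)
        + ε⁻¹ * (∑ k, ∑ l, pd j (v k l) (ε⁻¹ • x) * pd i (pd k (pd l u)) x)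
        + (ε⁻¹ * (∑ k, ∑ l, pd i (v k l) (ε⁻¹ • x) * pd j (pd k (pd l u)) x)
          + (∑ k, ∑ l, v k l (ε⁻¹ • x) * pd i (pd j (pd k (pd l u))) x)) := by
      simp only [Finset.mul_sum, ← Finset.sum_add_distrib]
      exact Finset.sum_congr rfl fun k _ => Finset.sum_congr rfl fun l _ => by ring
    rw [hsplit]
    field_simp
    ring
  -- rewrite the double sum in the goal
  have hsum : (∑ i, ∑ j, A (ε⁻¹ • x) i j *
        pd i (pd j (fun y => uε y - u y -
          ε ^ 2 * ((∑ k, ∑ l, v k l (ε⁻¹ • y) * pd k (pd l u) y) + θε y)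
          - 2 * ε * wε y)) x)
      = ∑ i, ∑ j, A (ε⁻¹ • x) i j *
        (pd i (pd j uε) x - pd i (pd j u) x
          - (∑ k, ∑ l, pd i (pd j (v k l)) (ε⁻¹ • x) * pd k (pd l u) x)
          - ε * (∑ k, ∑ l, pd j (v k l) (ε⁻¹ • x) * pd i (pd k (pd l u)) x)
          - ε * (∑ k, ∑ l, pd i (v k l) (ε⁻¹ • x) * pd j (pd k (pd l u)) x)
          - ε ^ 2 * (∑ k, ∑ l, v k l (ε⁻¹ • x) * pd i (pd j (pd k (pd l u))) x)
          - ε ^ 2 * pd i (pd j θε) x - 2 * ε * pd i (pd j wε) x) :=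
    Finset.sum_congr rfl fun i _ => Finset.sum_congr rfl fun j _ => by rw [key2 i j]
  rw [hsum]
  have split : (∑ i, ∑ j, A (ε⁻¹ • x) i j *
        (pd i (pd j uε) x - pd i (pd j u) x
          - (∑ k, ∑ l, pd i (pd j (v k l)) (ε⁻¹ • x) * pd k (pd l u) x)
          - ε * (∑ k, ∑ l, pd j (v k l) (ε⁻¹ • x) * pd i (pd k (pd l u)) x)
          - ε * (∑ k, ∑ l, pd i (v k l) (ε⁻¹ • x) * pd j (pd k (pd l u)) x)
          - ε ^ 2 * (∑ k, ∑ l, v k l (ε⁻¹ • x) * pd i (pd j (pd k (pd l u))) x)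
          - ε ^ 2 * pd i (pd j θε) x - 2 * ε * pd i (pd j wε) x))
      = (∑ i, ∑ j, A (ε⁻¹ • x) i j * pd i (pd j uε) x)
        - (∑ i, ∑ j, A (ε⁻¹ • x) i j * pd i (pd j u) x)
        - (∑ i, ∑ j, A (ε⁻¹ • x) i j *
            (∑ k, ∑ l, pd i (pd j (v k l)) (ε⁻¹ • x) * pd k (pd l u) x))
        - ε * (∑ i, ∑ j, A (ε⁻¹ • x) i j *
            (∑ k, ∑ l, pd j (v k l) (ε⁻¹ • x) * pd i (pd k (pd l u)) x))
        - ε * (∑ i, ∑ j, A (ε⁻¹ • x) i j *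
            (∑ k, ∑ l, pd i (v k l) (ε⁻¹ • x) * pd j (pd k (pd l u)) x))
        - ε ^ 2 * (∑ i, ∑ j, A (ε⁻¹ • x) i j *
            (∑ k, ∑ l, v k l (ε⁻¹ • x) * pd i (pd j (pd k (pd l u))) x))
        - ε ^ 2 * (∑ i, ∑ j, A (ε⁻¹ • x) i j * pd i (pd j θε) x)
        - 2 * ε * (∑ i, ∑ j, A (ε⁻¹ • x) i j * pd i (pd j wε) x) :=
    calc (∑ i, ∑ j, A (ε⁻¹ • x) i j * (_ : ℝ))
        = ∑ i, ∑ j, (A (ε⁻¹ • x) i j * pd i (pd j uε) x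
            - A (ε⁻¹ • x) i j * pd i (pd j u) x
            - A (ε⁻¹ • x) i j *
              (∑ k, ∑ l, pd i (pd j (v k l)) (ε⁻¹ • x) * pd k (pd l u) x)
            - ε * (A (ε⁻¹ • x) i j *
              (∑ k, ∑ l, pd j (v k l) (ε⁻¹ • x) * pd i (pd k (pd l u)) x))
            - ε * (A (ε⁻¹ • x) i j *
              (∑ k, ∑ l, pd i (v k l) (ε⁻¹ • x) * pd j (pd k (pd l u)) x))
            - ε ^ 2 * (A (ε⁻¹ • x) i j *
              (∑ k, ∑ l, v k l (ε⁻¹ • x) * pd i (pd j (pd k (pd l u))) x))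
            - ε ^ 2 * (A (ε⁻¹ • x) i j * pd i (pd j θε) x)
            - 2 * ε * (A (ε⁻¹ • x) i j * pd i (pd j wε) x)) :=
          Finset.sum_congr rfl fun i _ => Finset.sum_congr rfl fun j _ => by ring
      _ = _ := by simp only [Finset.sum_sub_distrib, ← Finset.mul_sum]
  rw [split]
  -- evaluate the four corrector blocks
  have hB1 : (∑ i, ∑ j, A (ε⁻¹ • x) i j *
        (∑ k, ∑ l, pd i (pd j (v k l)) (ε⁻¹ • x) * pd k (pd l u) x))
      = (∑ k, ∑ l, Abar k l * pd k (pd l u) x)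
        - (∑ k, ∑ l, A (ε⁻¹ • x) k l * pd k (pd l u) x) :=
    calc (∑ i, ∑ j, A (ε⁻¹ • x) i j * (_ : ℝ))
        = ∑ i, ∑ j, ∑ k, ∑ l, A (ε⁻¹ • x) i j *
            (pd i (pd j (v k l)) (ε⁻¹ • x) * pd k (pd l u) x) := by
          simp only [Finset.mul_sum]
      _ = ∑ k, ∑ l, ∑ i, ∑ j, A (ε⁻¹ • x) i j *
            (pd i (pd j (v k l)) (ε⁻¹ • x) * pd k (pd l u) x) := sum_comm4 _
      _ = ∑ k, ∑ l, (Abar k l - A (ε⁻¹ • x) k l) * pd k (pd l u) x :=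
          Finset.sum_congr rfl fun k _ => Finset.sum_congr rfl fun l _ => by
            have h := hveq k l (ε⁻¹ • x)
            have h2 : (∑ i, ∑ j, A (ε⁻¹ • x) i j *
                  (pd i (pd j (v k l)) (ε⁻¹ • x) * pd k (pd l u) x))
                = (∑ i, ∑ j, A (ε⁻¹ • x) i j * pd i (pd j (v k l)) (ε⁻¹ • x))
                  * pd k (pd l u) x := by
              rw [Finset.sum_mul]
              exact Finset.sum_congr rfl fun i _ => by
                rw [Finset.sum_mul]
                exact Finset.sum_congr rfl fun j _ => by ring
            rw [h2, show (∑ i, ∑ j, A (ε⁻¹ • x) i j * pd i (pd j (v k l)) (ε⁻¹ • x))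
              = Abar k l - A (ε⁻¹ • x) k l by linarith]
      _ = _ := by simp only [sub_mul, Finset.sum_sub_distrib]
  have hB2 : (∑ i, ∑ j, A (ε⁻¹ • x) i j *
        (∑ k, ∑ l, pd j (v k l) (ε⁻¹ • x) * pd i (pd k (pd l u)) x))
      = ∑ i, ∑ j, ∑ k, ∑ l, A (ε⁻¹ • x) i j * pd i (v k l) (ε⁻¹ • x)
          * pd j (pd k (pd l u)) x :=
    calc (∑ i, ∑ j, A (ε⁻¹ • x) i j * (_ : ℝ))
        = ∑ i, ∑ j, ∑ k, ∑ l, A (ε⁻¹ • x) i j *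
            (pd j (v k l) (ε⁻¹ • x) * pd i (pd k (pd l u)) x) := by
          simp only [Finset.mul_sum]
      _ = ∑ j, ∑ i, ∑ k, ∑ l, A (ε⁻¹ • x) i j *
            (pd j (v k l) (ε⁻¹ • x) * pd i (pd k (pd l u)) x) := Finset.sum_comm
      _ = _ := Finset.sum_congr rfl fun i _ => Finset.sum_congr rfl fun j _ =>
          Finset.sum_congr rfl fun k _ => Finset.sum_congr rfl fun l _ => by
            rw [hAsymm (ε⁻¹ • x) j i]; ring
  have hB3 : (∑ i, ∑ j, A (ε⁻¹ • x) i j *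
        (∑ k, ∑ l, pd i (v k l) (ε⁻¹ • x) * pd j (pd k (pd l u)) x))
      = ∑ i, ∑ j, ∑ k, ∑ l, A (ε⁻¹ • x) i j * pd i (v k l) (ε⁻¹ • x)
          * pd j (pd k (pd l u)) x := by
    simp only [Finset.mul_sum]
    exact Finset.sum_congr rfl fun i _ => Finset.sum_congr rfl fun j _ =>
      Finset.sum_congr rfl fun k _ => Finset.sum_congr rfl fun l _ => by ring
  have hB4 : (∑ i, ∑ j, A (ε⁻¹ • x) i j *
        (∑ k, ∑ l, v k l (ε⁻¹ • x) * pd i (pd j (pd k (pd l u))) x))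
      = ∑ i, ∑ j, ∑ k, ∑ l, A (ε⁻¹ • x) i j * v k l (ε⁻¹ • x)
          * pd i (pd j (pd k (pd l u))) x := by
    simp only [Finset.mul_sum]
    exact Finset.sum_congr rfl fun i _ => Finset.sum_congr rfl fun j _ =>
      Finset.sum_congr rfl fun k _ => Finset.sum_congr rfl fun l _ => by ring
  rw [hB1, hB2, hB3, hB4]
  have F1 := huεeq x hx
  have F2 := hueq x hx
  have F3 := hθeq x hx
  have F4 := hweq x hx
  linear_combination F1 - F2 + ε ^ 2 * F3 - 2 * ε * F4
end
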